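/- The clique polynomial of a free partially commutative monoid M is a two-sided inverse of the constant power series χ_M (the formal power series assigning 1 to every element of M) in the ring of formal power series on M with integer coefficients. -/

import Mathlib

open scoped Classical

/-- The relation generating a free partially commutative (trace) monoid:
`x_a x_b = x_b x_a` for `(a,b)` in the commutation set `I`. -/
def traceRel (n : ℕ) (I : Set (Fin n × Fin n)) :
    FreeMonoid (Fin n) → FreeMonoid (Fin n) → Prop := fun u v =>
  ∃ a b, (a, b) ∈ I ∧ u = FreeMonoid.of a * FreeMonoid.of b ∧
    v = FreeMonoid.of b * FreeMonoid.of a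

/-- The congruence generated by the commutation relations. -/
abbrev traceCon (n : ℕ) (I : Set (Fin n × Fin n)) : Con (FreeMonoid (Fin n)) :=
  conGen (traceRel n I)

/-- The free partially commutative monoid `⟨x_1,…,x_n⟩/≃_I`. -/
abbrev TraceMonoid (n : ℕ) (I : Set (Fin n × Fin n)) := (traceCon n I).Quotient

/-- The generator `x_i` as an element of the trace monoid. -/
def gen {n : ℕ} {I : Set (Fin n × Fin n)} (i : Fin n) : TraceMonoid n I :=
  (traceCon n I).mk' (FreeMonoid.of i)

/-- A clique of the trace monoid: a set of generators which pairwise commute. -/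
def IsMClique {n : ℕ} (I : Set (Fin n × Fin n)) (Q : Finset (Fin n)) : Prop :=
  ∀ a ∈ Q, ∀ b ∈ Q, a ≠ b → Commute (gen (I := I) a) (gen (I := I) b)

/-- The canonical word `w_Q` in the trace monoid associated to a finite set of
generators (taking the product in increasing order). -/
def wordOf {n : ℕ} (I : Set (Fin n × Fin n)) (Q : Finset (Fin n)) : TraceMonoid n I :=
  (traceCon n I).mk' (FreeMonoid.ofList (Q.sort (· ≤ ·)))

/-- The Cauchy product of two formal power series on a monoid. -/
noncomputable def cauchy {M : Type*} [Monoid M] (f g : M → ℤ) : M → ℤ := fun w =>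
  ∑ᶠ p : M × M, if p.1 * p.2 = w then f p.1 * g p.2 else 0

/-- The unit of the ring of formal power series: the characteristic function
of the identity. -/
noncomputable def deltaOne {M : Type*} [Monoid M] : M → ℤ := fun w => if w = 1 then 1 else 0

/-- The clique polynomial `μ_M = Σ_Q (−1)^{|Q|} [Q]` of a trace monoid. -/
noncomputable def cliqueSeries (n : ℕ) (I : Set (Fin n × Fin n)) : TraceMonoid n I → ℤ :=
  fun w => ∑ Q ∈ (Finset.univ : Finset (Fin n)).powerset.filter (IsMClique I),
    if wordOf I Q = w then (-1 : ℤ) ^ Q.card else 0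
section CF
variable {n : ℕ} {I : Set (Fin n × Fin n)}

/-- `mk l` : the class of a list in the trace monoid. -/
def mkT (I : Set (Fin n × Fin n)) (l : List (Fin n)) : TraceMonoid n I :=
  (traceCon n I).mk' (FreeMonoid.ofList l)

lemma mkT_nil : mkT I [] = 1 := rfl

lemma mkT_cons (a : Fin n) (l : List (Fin n)) :
    mkT I (a :: l) = gen a * mkT I l := by
  rw [mkT, mkT, gen, ← map_mul]
  rfl

lemma mkT_append (l m : List (Fin n)) :
    mkT I (l ++ m) = mkT I l * mkT I m := by
  rw [mkT, mkT, mkT, ← map_mul]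
  rfl

lemma mkT_singleton (a : Fin n) : mkT I [a] = gen a := by
  simp [mkT_cons, mkT_nil]

/-- symmetric commutation relation -/
def Rl (I : Set (Fin n × Fin n)) (a b : Fin n) : Prop := (a, b) ∈ I ∨ (b, a) ∈ I

lemma mkT_swap {a b : Fin n} (h : Rl I a b) : mkT I [a, b] = mkT I [b, a] := by
  have : ∀ x y : Fin n, (x, y) ∈ I → mkT I [x, y] = mkT I [y, x] := by
    intro x y hxy
    exact (Con.eq _).2 (ConGen.Rel.of _ _ ⟨x, y, hxy, rfl, rfl⟩)
  rcases h with h | h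
  · exact this a b h
  · exact (this b a h).symm

lemma commute_of_Rl {a b : Fin n} (h : Rl I a b) :
    Commute (gen (I := I) a) (gen (I := I) b) := by
  have := mkT_swap (I := I) h
  simp only [show ([a,b] : List (Fin n)) = [a] ++ [b] from rfl,
    show ([b,a] : List (Fin n)) = [b] ++ [a] from rfl, mkT_append, mkT_singleton] at this
  exact this

end CF

section Extract
variable {n : ℕ} {I : Set (Fin n × Fin n)}

/-- Extract the letter `a` from the front of a word, commuting it past
letters that commute with it. -/
noncomputable def extract (I : Set (Fin n × Fin n)) (a : Fin n) :
    List (Fin n) → Option (List (Fin n))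
  | [] => none
  | b :: l => if b = a then some l
      else if Rl I a b then (extract I a l).map (b :: ·) else none

/-- `a` does not occur in `l` and commutes with every letter of `l`. -/
def clearL (I : Set (Fin n × Fin n)) (a : Fin n) (l : List (Fin n)) : Prop :=
  a ∉ l ∧ ∀ b ∈ l, Rl I a b

lemma clearL_nil (a : Fin n) : clearL I a [] := ⟨by simp, by simp⟩

lemma clearL_cons {a b : Fin n} {l : List (Fin n)} :
    clearL I a (b :: l) ↔ (b ≠ a ∧ Rl I a b ∧ clearL I a l) := by
  constructor
  · rintro ⟨h1, h2⟩
    exact ⟨fun h => h1 (h ▸ (List.mem_cons_self : b ∈ b :: l)), h2 b ((List.mem_cons_self : b ∈ b :: l)),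
      fun h => h1 (List.mem_cons_of_mem b h), fun c hc => h2 c (List.mem_cons_of_mem b hc)⟩
  · rintro ⟨h1, h2, h3, h4⟩
    refine ⟨?_, ?_⟩
    · intro h
      rcases List.mem_cons.1 h with h | h
      · exact h1 h.symm
      · exact h3 h
    · intro c hc
      rcases List.mem_cons.1 hc with h | h
      · exact h ▸ h2
      · exact h4 c h

lemma clearL_append {a : Fin n} {l m : List (Fin n)} :
    clearL I a (l ++ m) ↔ clearL I a l ∧ clearL I a m := by
  simp only [clearL, List.mem_append, not_or]
  constructor
  · rintro ⟨⟨h1, h2⟩, h3⟩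
    exact ⟨⟨h1, fun b hb => h3 b (Or.inl hb)⟩, ⟨h2, fun b hb => h3 b (Or.inr hb)⟩⟩
  · rintro ⟨⟨h1, h2⟩, ⟨h3, h4⟩⟩
    exact ⟨⟨h1, h3⟩, fun b hb => hb.elim (h2 b) (h4 b)⟩

lemma extract_of_clearL {a : Fin n} : ∀ {l : List (Fin n)}, clearL I a l →
    extract I a l = none
  | [], _ => rfl
  | b :: l, h => by
    obtain ⟨h1, h2, h3⟩ := clearL_cons.1 h
    rw [extract, if_neg h1, if_pos h2, extract_of_clearL h3, Option.map_none]

lemma extract_append_some {a : Fin n} : ∀ {l l' : List (Fin n)} (m : List (Fin n)),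
    extract I a l = some l' → extract I a (l ++ m) = some (l' ++ m)
  | [], l', m, h => by simp [extract] at h
  | b :: l, l', m, h => by
    rw [extract] at h
    by_cases hb : b = a
    · rw [if_pos hb] at h
      rw [List.cons_append, extract, if_pos hb]
      simp at h
      rw [h]
    · rw [if_neg hb] at h
      by_cases hr : Rl I a b
      · rw [if_pos hr] at h
        rcases Option.map_eq_some_iff.1 h with ⟨t, ht, rfl⟩
        rw [List.cons_append, extract, if_neg hb, if_pos hr,
          extract_append_some m ht, Option.map_some]
        rfl
      · rw [if_neg hr] at h; exact absurd h (by simp)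

lemma extract_append_clear {a : Fin n} : ∀ {l : List (Fin n)} (m : List (Fin n)),
    clearL I a l → extract I a (l ++ m) = (extract I a m).map (l ++ ·)
  | [], m, _ => by simp
  | b :: l, m, h => by
    obtain ⟨h1, h2, h3⟩ := clearL_cons.1 h
    rw [List.cons_append, extract, if_neg h1, if_pos h2, extract_append_clear m h3,
      Option.map_map]
    rfl

lemma extract_append_none {a : Fin n} : ∀ {l : List (Fin n)} (m : List (Fin n)),
    extract I a l = none → ¬ clearL I a l → extract I a (l ++ m) = none
  | [], m, h, hc => absurd (clearL_nil a) hc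
  | b :: l, m, h, hc => by
    rw [extract] at h
    by_cases hb : b = a
    · rw [if_pos hb] at h; exact absurd h (by simp)
    · rw [if_neg hb] at h
      by_cases hr : Rl I a b
      · rw [if_pos hr] at h
        have h' : extract I a l = none := by
          cases hx : extract I a l with
          | none => rfl
          | some t => rw [hx] at h; simp at h
        have hc' : ¬ clearL I a l := fun hcl => hc (clearL_cons.2 ⟨hb, hr, hcl⟩)
        rw [List.cons_append, extract, if_neg hb, if_pos hr,
          extract_append_none m h' hc', Option.map_none]
      · rw [List.cons_append, extract, if_neg hb, if_neg hr]

end Extract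

section Invariant
variable {n : ℕ} {I : Set (Fin n × Fin n)}

lemma mkT_toList (u : FreeMonoid (Fin n)) : mkT I u.toList = (traceCon n I).mk' u := rfl

lemma Rl_symm {a b : Fin n} (h : Rl I a b) : Rl I b a := h.symm

lemma extract_nil (a : Fin n) : extract I a [] = none := rfl

lemma extract_pair_eq (a x y : Fin n) :
    extract I a [x, y] =
      if x = a then some [y]
      else if Rl I a x then (if y = a then some [x] else none) else none := by
  rw [extract]
  by_cases hx : x = a
  · rw [if_pos hx, if_pos hx]
  · rw [if_neg hx, if_neg hx]
    by_cases hr : Rl I a x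
    · rw [if_pos hr, if_pos hr, extract]
      by_cases hy : y = a
      · rw [if_pos hy, if_pos hy, Option.map_some]
      · rw [if_neg hy, if_neg hy]
        by_cases hr' : Rl I a y
        · rw [if_pos hr', extract_nil, Option.map_none, Option.map_none]
        · rw [if_neg hr', Option.map_none]
    · rw [if_neg hr, if_neg hr]

lemma extract_pair (a : Fin n) {x y : Fin n} (hr : Rl I x y) :
    extract I a [x, y] = extract I a [y, x] := by
  rw [extract_pair_eq, extract_pair_eq]
  by_cases hx : x = a
  · by_cases hy : y = a
    · simp [hx, hy]
    · simp [hx, hy, show Rl I a y from hx ▸ hr]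
  · by_cases hy : y = a
    · simp [hx, hy, show Rl I a x from hy ▸ Rl_symm hr]
    · simp [hx, hy, ite_self]

lemma extract_invariant (a : Fin n) :
    ∀ u v : FreeMonoid (Fin n), traceCon n I u v →
      ((extract I a u.toList).map (mkT I) = (extract I a v.toList).map (mkT I)) ∧
      (clearL I a u.toList ↔ clearL I a v.toList) := by
  intro u v h
  induction h with
  | of u v huv =>
    obtain ⟨x, y, hxy, rfl, rfl⟩ := huv
    have hx : (FreeMonoid.of x * FreeMonoid.of y : FreeMonoid (Fin n)).toList = [x, y] := rfl
    have hy : (FreeMonoid.of y * FreeMonoid.of x : FreeMonoid (Fin n)).toList = [y, x] := rfl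
    rw [hx, hy]
    constructor
    · rw [extract_pair a (Or.inl hxy : Rl I x y)]
    · constructor
      · rintro h
        obtain ⟨h1, h2, h3⟩ := clearL_cons.1 h
        obtain ⟨h4, h5, _⟩ := clearL_cons.1 h3
        exact clearL_cons.2 ⟨h4, h5, clearL_cons.2 ⟨h1, h2, clearL_nil a⟩⟩
      · rintro h
        obtain ⟨h1, h2, h3⟩ := clearL_cons.1 h
        obtain ⟨h4, h5, _⟩ := clearL_cons.1 h3
        exact clearL_cons.2 ⟨h4, h5, clearL_cons.2 ⟨h1, h2, clearL_nil a⟩⟩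
  | refl u => exact ⟨rfl, Iff.rfl⟩
  | symm _ ih => exact ⟨ih.1.symm, ih.2.symm⟩
  | trans _ _ ih1 ih2 => exact ⟨ih1.1.trans ih2.1, ih1.2.trans ih2.2⟩
  | mul h1 h2 ih1 ih2 =>
    rename_i w x y z
    have hwx : mkT I w.toList = mkT I x.toList := by
      rw [mkT_toList, mkT_toList]; exact (Con.eq _).2 h1
    have hyz : mkT I y.toList = mkT I z.toList := by
      rw [mkT_toList, mkT_toList]; exact (Con.eq _).2 h2
    have hW : (w * y).toList = w.toList ++ y.toList := rfl
    have hX : (x * z).toList = x.toList ++ z.toList := rfl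
    rw [hW, hX]
    constructor
    · cases hew : extract I a w.toList with
      | some w' =>
        have : (extract I a x.toList).map (mkT I) = some (mkT I w') := by
          rw [← ih1.1, hew]; rfl
        rcases Option.map_eq_some_iff.1 this with ⟨x', hx', hmk⟩
        rw [extract_append_some _ hew, extract_append_some _ hx']
        simp only [Option.map_some]
        rw [mkT_append, mkT_append, hmk, hyz]
      | none =>
        have hex : extract I a x.toList = none := by
          have := ih1.1
          rw [hew] at this
          cases hx : extract I a x.toList with
          | none => rfl
          | some t => rw [hx] at this; simp at this
        by_cases hc : clearL I a w.toList
        · have hcx : clearL I a x.toList := ih1.2.1 hc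
          rw [extract_append_clear _ hc, extract_append_clear _ hcx]
          rw [Option.map_map, Option.map_map]
          have e1 : (mkT I ∘ (w.toList ++ ·)) = ((mkT I w.toList * ·) ∘ mkT I) := by
            funext t; exact mkT_append _ _
          have e2 : (mkT I ∘ (x.toList ++ ·)) = ((mkT I x.toList * ·) ∘ mkT I) := by
            funext t; exact mkT_append _ _
          rw [e1, e2, hwx, ← Option.map_map, ← Option.map_map, ih2.1]
        · have hcx : ¬ clearL I a x.toList := fun hx => hc (ih1.2.2 hx)
          rw [extract_append_none _ hew hc, extract_append_none _ hex hcx]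
    · rw [clearL_append, clearL_append]
      exact and_congr ih1.2 ih2.2

end Invariant

section Keys
variable {n : ℕ} {I : Set (Fin n × Fin n)}

/-- The extraction operation descends to the trace monoid. -/
noncomputable def Efun (I : Set (Fin n × Fin n)) (a : Fin n) :
    TraceMonoid n I → Option (TraceMonoid n I) := fun q =>
  Con.liftOn q (fun u => (extract I a u.toList).map (mkT I))
    (fun u v h => (extract_invariant a u v h).1)

lemma Efun_mk (a : Fin n) (l : List (Fin n)) :
    Efun I a (mkT I l) = (extract I a l).map (mkT I) := rfl

lemma exists_list (w : TraceMonoid n I) : ∃ l : List (Fin n), w = mkT I l :=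
  Con.induction_on w (fun x => ⟨x.toList, rfl⟩)

lemma extract_some_eq {a : Fin n} : ∀ {l m : List (Fin n)},
    extract I a l = some m → mkT I l = gen a * mkT I m
  | [], m, h => by simp [extract_nil] at h
  | b :: l, m, h => by
    rw [extract] at h
    by_cases hb : b = a
    · rw [if_pos hb] at h
      obtain rfl : l = m := by simpa using h
      rw [hb, mkT_cons]
    · rw [if_neg hb] at h
      by_cases hr : Rl I a b
      · rw [if_pos hr] at h
        rcases Option.map_eq_some_iff.1 h with ⟨t, ht, rfl⟩
        rw [mkT_cons, extract_some_eq ht, mkT_cons, ← mul_assoc, ← mul_assoc,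
          (commute_of_Rl (Rl_symm hr)).eq]
      · rw [if_neg hr] at h; exact absurd h (by simp)

lemma Efun_gen_mul (a : Fin n) (w : TraceMonoid n I) :
    Efun I a (gen a * w) = some w := by
  obtain ⟨l, rfl⟩ := exists_list w
  rw [← mkT_cons, Efun_mk, extract, if_pos rfl, Option.map_some]

lemma cancel_gen {a : Fin n} {u v : TraceMonoid n I} (h : gen a * u = gen a * v) :
    u = v := by
  have := congrArg (Efun I a) h
  rw [Efun_gen_mul, Efun_gen_mul] at this
  exact Option.some_injective _ this

lemma LL_mul_gen {a b : Fin n} {v v₂ : TraceMonoid n I}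
    (h : gen a * v = gen b * v₂) (hne : a ≠ b) :
    Rl I a b ∧ ∃ t, v = gen b * t := by
  obtain ⟨l, rfl⟩ := exists_list v
  have h' := congrArg (Efun I b) h
  rw [Efun_gen_mul, ← mkT_cons, Efun_mk, extract, if_neg hne] at h'
  by_cases hr : Rl I b a
  · rw [if_pos hr] at h'
    cases hx : extract I b l with
    | none => rw [hx] at h'; simp at h'
    | some m => exact ⟨Rl_symm hr, mkT I m, extract_some_eq hx⟩
  · rw [if_neg hr] at h'; simp at h'

/-- The length homomorphism. -/
noncomputable def lenHom (n : ℕ) (I : Set (Fin n × Fin n)) :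
    TraceMonoid n I →* Multiplicative ℕ :=
  Con.lift _ (FreeMonoid.lift (fun _ : Fin n => Multiplicative.ofAdd (1 : ℕ)))
    (by
      refine Con.conGen_le.2 (fun x y hxy => ?_)
      obtain ⟨a, b, _, rfl, rfl⟩ := hxy
      show FreeMonoid.lift _ _ = FreeMonoid.lift _ _
      rw [map_mul, map_mul, FreeMonoid.lift_eval_of, FreeMonoid.lift_eval_of])

lemma lenHom_mk (l : List (Fin n)) :
    lenHom n I (mkT I l) = Multiplicative.ofAdd l.length := by
  induction l with
  | nil =>
    have : mkT I ([] : List (Fin n)) = 1 := rfl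
    rw [this, map_one]
    rfl
  | cons a l ih =>
    rw [mkT_cons, map_mul, ih]
    have : lenHom n I (gen a) = Multiplicative.ofAdd 1 := by
      show Con.lift _ _ _ ((traceCon n I).mk' (FreeMonoid.of a)) = _
      rw [Con.lift_mk', FreeMonoid.lift_eval_of]
    rw [this, ← ofAdd_add, add_comm]
    rfl

lemma mkT_eq_one {l : List (Fin n)} (h : mkT I l = 1) : l = [] := by
  have h1 := congrArg (lenHom n I) h
  rw [lenHom_mk, map_one] at h1
  have : l.length = 0 := by
    have := congrArg Multiplicative.toAdd h1
    simpa using this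
  exact List.length_eq_zero_iff.1 this

lemma exists_left_letter {w : TraceMonoid n I} (h : w ≠ 1) :
    ∃ a v, w = gen a * v := by
  obtain ⟨l, rfl⟩ := exists_list w
  cases l with
  | nil => exact absurd rfl h
  | cons a l => exact ⟨a, mkT I l, mkT_cons a l⟩

lemma finite_pairs (w : TraceMonoid n I) :
    {p : TraceMonoid n I × TraceMonoid n I | p.1 * p.2 = w}.Finite := by
  classical
  set L := Multiplicative.toAdd (lenHom n I w) with hL
  have hsub : {p : TraceMonoid n I × TraceMonoid n I | p.1 * p.2 = w} ⊆
      (fun q : List (Fin n) × List (Fin n) => (mkT I q.1, mkT I q.2)) ''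
        ({l : List (Fin n) | l.length ≤ L} ×ˢ {l : List (Fin n) | l.length ≤ L}) := by
    rintro ⟨u, v⟩ huv
    obtain ⟨l1, rfl⟩ := exists_list u
    obtain ⟨l2, rfl⟩ := exists_list v
    have hlen : l1.length + l2.length = L := by
      have := congrArg (lenHom n I) huv
      rw [map_mul, lenHom_mk, lenHom_mk] at this
      have := congrArg Multiplicative.toAdd this
      simpa using this
    exact ⟨(l1, l2), ⟨hlen ▸ Nat.le_add_right _ _, hlen ▸ Nat.le_add_left _ _⟩, rfl⟩
  exact Set.Finite.subset
    (Set.Finite.image _ (Set.Finite.prod (List.finite_length_le (Fin n) L) (List.finite_length_le (Fin n) L))) hsub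

lemma finite_rdiv (w : TraceMonoid n I) :
    {v : TraceMonoid n I | ∃ u, u * v = w}.Finite := by
  have : {v : TraceMonoid n I | ∃ u, u * v = w} ⊆
      Prod.snd '' {p : TraceMonoid n I × TraceMonoid n I | p.1 * p.2 = w} := by
    rintro v ⟨u, hu⟩
    exact ⟨(u, v), hu, rfl⟩
  exact Set.Finite.subset ((finite_pairs w).image _) this

end Keys

section Word
variable {n : ℕ} {I : Set (Fin n × Fin n)}

lemma mkT_eq_prod (l : List (Fin n)) : mkT I l = (l.map gen).prod := by
  induction l with
  | nil => rfl
  | cons a l ih => rw [mkT_cons, ih, List.map_cons, List.prod_cons]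

lemma wordOf_eq_mkT (Q : Finset (Fin n)) : wordOf I Q = mkT I (Q.sort (· ≤ ·)) := rfl

lemma wordOf_empty : wordOf I (∅ : Finset (Fin n)) = 1 := by
  rw [wordOf_eq_mkT, Finset.sort_empty]
  rfl

lemma clique_mono {Q P : Finset (Fin n)} (h : IsMClique I Q) (hs : P ⊆ Q) :
    IsMClique I P := fun a ha b hb hab => h a (hs ha) b (hs hb) hab

lemma clique_pairwise {Q : Finset (Fin n)} (h : IsMClique I Q) {l : List (Fin n)}
    (hnd : l.Nodup) (hmem : ∀ x ∈ l, x ∈ Q) :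
    (l.map (gen (I := I))).Pairwise Commute := by
  rw [List.pairwise_map]
  exact List.Pairwise.imp_of_mem
    (fun {a b} ha hb hab => h a (hmem a ha) b (hmem b hb) hab) hnd

lemma sort_insert_perm {a : Fin n} {Q : Finset (Fin n)} (ha : a ∉ Q) :
    List.Perm ((insert a Q).sort (· ≤ ·)) (a :: Q.sort (· ≤ ·)) :=
  ((insert a Q).sort_perm_toList _).trans
    ((Finset.toList_insert ha).trans ((Q.sort_perm_toList _).symm.cons a))

lemma wordOf_insert {a : Fin n} {Q : Finset (Fin n)} (ha : a ∉ Q)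
    (hc : IsMClique I (insert a Q)) :
    wordOf I (insert a Q) = gen a * wordOf I Q ∧
      wordOf I (insert a Q) = wordOf I Q * gen a := by
  have hpw : (((insert a Q).sort (· ≤ ·)).map (gen (I := I))).Pairwise Commute :=
    clique_pairwise hc (Finset.sort_nodup _ _) (fun x hx => (Finset.mem_sort _).1 hx)
  have h1 : wordOf I (insert a Q) = gen a * wordOf I Q := by
    rw [wordOf_eq_mkT, mkT_eq_prod,
      List.Perm.prod_eq' ((sort_insert_perm ha).map (gen (I := I))) hpw,
      List.map_cons, List.prod_cons, wordOf_eq_mkT, mkT_eq_prod]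
  refine ⟨h1, ?_⟩
  have hpw2 : ((a :: Q.sort (· ≤ ·)).map (gen (I := I))).Pairwise Commute :=
    hpw.perm ((sort_insert_perm ha).map _) (by intro x y h; exact h.symm)
  have hperm : List.Perm (a :: Q.sort (· ≤ ·)) (Q.sort (· ≤ ·) ++ [a]) :=
    (List.perm_append_singleton a _).symm
  rw [wordOf_eq_mkT, mkT_eq_prod,
    List.Perm.prod_eq' ((sort_insert_perm ha).map (gen (I := I))) hpw,
    List.Perm.prod_eq' (hperm.map (gen (I := I))) hpw2,
    List.map_append, List.prod_append, wordOf_eq_mkT, mkT_eq_prod]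
  simp

lemma lenHom_wordOf (Q : Finset (Fin n)) :
    lenHom n I (wordOf I Q) = Multiplicative.ofAdd Q.card := by
  rw [wordOf_eq_mkT, lenHom_mk, Finset.length_sort]

end Word

section Rev
variable {n : ℕ} {I : Set (Fin n × Fin n)}

noncomputable def revHom (n : ℕ) (I : Set (Fin n × Fin n)) :
    TraceMonoid n I →* (TraceMonoid n I)ᵐᵒᵖ :=
  Con.lift _ (FreeMonoid.lift (fun i => MulOpposite.op (gen (I := I) i)))
    (by
      refine Con.conGen_le.2 (fun x y hxy => ?_)
      obtain ⟨a, b, hab, rfl, rfl⟩ := hxy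
      show FreeMonoid.lift _ _ = FreeMonoid.lift _ _
      rw [map_mul, map_mul, FreeMonoid.lift_eval_of, FreeMonoid.lift_eval_of,
        ← MulOpposite.op_mul, ← MulOpposite.op_mul]
      exact congrArg _ (commute_of_Rl (Or.inl hab : Rl I a b)).eq.symm)

noncomputable def revT (w : TraceMonoid n I) : TraceMonoid n I :=
  (revHom n I w).unop

lemma revT_mul (u v : TraceMonoid n I) : revT (u * v) = revT v * revT u := by
  rw [revT, revT, revT, map_mul]
  rfl

lemma revT_gen (a : Fin n) : revT (gen (I := I) a) = gen a := by
  have h : revHom n I (gen (I := I) a) = MulOpposite.op (gen a) := by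
    rw [gen, revHom, Con.lift_mk', FreeMonoid.lift_eval_of]
    rfl
  rw [revT, h]
  rfl

lemma revT_one : revT (1 : TraceMonoid n I) = 1 := by rw [revT, map_one]; rfl

lemma revT_mkT (l : List (Fin n)) : revT (mkT I l) = mkT I l.reverse := by
  induction l with
  | nil => exact revT_one
  | cons a l ih =>
    rw [mkT_cons, revT_mul, revT_gen, ih, List.reverse_cons, mkT_append, mkT_singleton]

lemma revT_revT (w : TraceMonoid n I) : revT (revT w) = w := by
  obtain ⟨l, rfl⟩ := exists_list w
  rw [revT_mkT, revT_mkT, List.reverse_reverse]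

lemma revT_inj : Function.Injective (revT (n := n) (I := I)) :=
  Function.LeftInverse.injective revT_revT

lemma revT_eq_one_iff {w : TraceMonoid n I} : revT w = 1 ↔ w = 1 := by
  constructor
  · intro h
    have := congrArg revT h
    rwa [revT_revT, revT_one] at this
  · rintro rfl; exact revT_one

lemma revT_wordOf {Q : Finset (Fin n)} (hc : IsMClique I Q) :
    revT (wordOf I Q) = wordOf I Q := by
  rw [wordOf_eq_mkT, revT_mkT, mkT_eq_prod, mkT_eq_prod]
  exact List.Perm.prod_eq'
    ((List.reverse_perm _).map _)
    (clique_pairwise hc (List.nodup_reverse.2 (Finset.sort_nodup _ _))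
      (fun x hx => (Finset.mem_sort _).1 (List.mem_reverse.1 hx)))

end Rev

section Invol
variable {n : ℕ} {I : Set (Fin n × Fin n)}

/-- The set of candidate letters for the involution at a pair `(Q, v)`. -/
noncomputable def TsetF (x : Finset (Fin n) × TraceMonoid n I) : Finset (Fin n) :=
  Finset.univ.filter (fun a => a ∈ x.1 ∨
    ((∃ t, x.2 = gen (I := I) a * t) ∧ IsMClique I (insert a x.1)))

lemma mem_TsetF {x : Finset (Fin n) × TraceMonoid n I} {a : Fin n} :
    a ∈ TsetF x ↔ (a ∈ x.1 ∨
      ((∃ t, x.2 = gen (I := I) a * t) ∧ IsMClique I (insert a x.1))) := by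
  simp [TsetF]

lemma TsetF_nonempty {w : TraceMonoid n I} (hw : w ≠ 1)
    {x : Finset (Fin n) × TraceMonoid n I}
    (hs : wordOf I x.1 * x.2 = w) : (TsetF x).Nonempty := by
  rcases Finset.eq_empty_or_nonempty x.1 with he | ⟨a, ha⟩
  · have hx2 : x.2 = w := by rw [he, wordOf_empty, one_mul] at hs; exact hs
    have hx2ne : x.2 ≠ 1 := fun h => hw (hx2 ▸ h)
    obtain ⟨a, v, hv⟩ := exists_left_letter hx2ne
    refine ⟨a, mem_TsetF.2 (Or.inr ⟨⟨v, hv⟩, ?_⟩)⟩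
    intro p hp q hq hpq
    rw [he] at hp hq
    simp only [Finset.mem_insert, Finset.notMem_empty, or_false] at hp hq
    exact absurd (hp.trans hq.symm) hpq
  · exact ⟨a, mem_TsetF.2 (Or.inl ha)⟩

lemma min_pres1 {Q : Finset (Fin n)} {v : TraceMonoid n I} {a : Fin n}
    (hQ : IsMClique I Q) (ha : a ∈ Q)
    (hmin : ∀ b ∈ TsetF (Q, v), a ≤ b) :
    a ∈ TsetF (Q.erase a, gen (I := I) a * v) ∧
      ∀ b ∈ TsetF (Q.erase a, gen (I := I) a * v), a ≤ b := by
  constructor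
  · exact mem_TsetF.2 (Or.inr ⟨⟨v, rfl⟩, by rw [Finset.insert_erase ha]; exact hQ⟩)
  · intro b hb
    rcases mem_TsetF.1 hb with hb1 | ⟨⟨t, ht⟩, hcl⟩
    · exact hmin b (mem_TsetF.2 (Or.inl (Finset.mem_of_mem_erase hb1)))
    · by_cases hba : b = a
      · exact hba.ge
      · have hab : a ≠ b := fun h => hba h.symm
        obtain ⟨hRl, t', ht'⟩ := LL_mul_gen ht hab
        refine hmin b (mem_TsetF.2 (Or.inr ⟨⟨t', ht'⟩, ?_⟩))
        intro p hp q hq hpq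
        rcases Finset.mem_insert.1 hp with rfl | hp' <;>
          rcases Finset.mem_insert.1 hq with rfl | hq'
        · exact absurd rfl hpq
        · by_cases hqa : q = a
          · exact hqa ▸ (commute_of_Rl hRl).symm
          · exact hcl p (Finset.mem_insert_self _ _)
              q (Finset.mem_insert_of_mem (Finset.mem_erase.2 ⟨hqa, hq'⟩)) hpq
        · by_cases hpa : p = a
          · exact hpa ▸ (commute_of_Rl hRl)
          · exact (hcl q (Finset.mem_insert_self _ _)
              p (Finset.mem_insert_of_mem (Finset.mem_erase.2 ⟨hpa, hp'⟩)) (Ne.symm hpq)).symm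
        · exact hQ p hp' q hq' hpq

lemma min_pres2 {Q : Finset (Fin n)} {v t : TraceMonoid n I} {a : Fin n}
    (hcl : IsMClique I (insert a Q)) (ha : a ∉ Q) (hv : v = gen (I := I) a * t)
    (hmin : ∀ b ∈ TsetF (Q, v), a ≤ b) :
    a ∈ TsetF (insert a Q, t) ∧ ∀ b ∈ TsetF (insert a Q, t), a ≤ b := by
  constructor
  · exact mem_TsetF.2 (Or.inl (Finset.mem_insert_self _ _))
  · intro b hb
    rcases mem_TsetF.1 hb with hb1 | ⟨⟨s, hs⟩, hcl'⟩
    · rcases Finset.mem_insert.1 hb1 with rfl | hb2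
      · exact le_refl _
      · exact hmin b (mem_TsetF.2 (Or.inl hb2))
    · by_cases hba : b = a
      · exact hba.ge
      · have hcomm : Commute (gen (I := I) a) (gen (I := I) b) :=
          hcl' a (Finset.mem_insert_of_mem (Finset.mem_insert_self _ _))
            b (Finset.mem_insert_self _ _) (fun h => hba h.symm)
        refine hmin b (mem_TsetF.2 (Or.inr ⟨⟨gen a * s, ?_⟩, ?_⟩))
        · show v = gen b * (gen a * s)
          have hs' : t = gen b * s := hs
          rw [hv, hs', ← mul_assoc, ← mul_assoc, hcomm.eq]
        · refine clique_mono hcl' (Finset.insert_subset_insert _ (Finset.subset_insert _ _))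

lemma TsetF_min_case1 {Q : Finset (Fin n)} {v : TraceMonoid n I} {a : Fin n}
    (hQ : IsMClique I Q) (ha : a ∈ Q)
    (hmin : ∀ b ∈ TsetF (Q, v), a ≤ b) :
    ∃ hne : (TsetF (Q.erase a, gen (I := I) a * v)).Nonempty,
      (TsetF (Q.erase a, gen (I := I) a * v)).min' hne = a := by
  obtain ⟨hmem, hle⟩ := min_pres1 hQ ha hmin
  refine ⟨⟨a, hmem⟩, le_antisymm (Finset.min'_le _ _ hmem) (hle _ (Finset.min'_mem _ _))⟩

lemma TsetF_min_case2 {Q : Finset (Fin n)} {v t : TraceMonoid n I} {a : Fin n}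
    (hcl : IsMClique I (insert a Q)) (ha : a ∉ Q) (hv : v = gen (I := I) a * t)
    (hmin : ∀ b ∈ TsetF (Q, v), a ≤ b) :
    ∃ hne : (TsetF (insert a Q, t)).Nonempty,
      (TsetF (insert a Q, t)).min' hne = a := by
  obtain ⟨hmem, hle⟩ := min_pres2 hcl ha hv hmin
  refine ⟨⟨a, hmem⟩, le_antisymm (Finset.min'_le _ _ hmem) (hle _ (Finset.min'_mem _ _))⟩

/-- The involution step. -/
noncomputable def gstep (x : Finset (Fin n) × TraceMonoid n I) :
    Finset (Fin n) × TraceMonoid n I :=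
  if hne : (TsetF x).Nonempty then
    if (TsetF x).min' hne ∈ x.1 then
      (x.1.erase ((TsetF x).min' hne), gen ((TsetF x).min' hne) * x.2)
    else if ht : ∃ t, x.2 = gen (I := I) ((TsetF x).min' hne) * t then
      (insert ((TsetF x).min' hne) x.1, Classical.choose ht)
    else x
  else x

lemma gstep_eq1 {x : Finset (Fin n) × TraceMonoid n I} (hne : (TsetF x).Nonempty)
    (hmem : (TsetF x).min' hne ∈ x.1) :
    gstep x = (x.1.erase ((TsetF x).min' hne), gen ((TsetF x).min' hne) * x.2) := by
  rw [gstep, dif_pos hne, if_pos hmem]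

lemma gstep_eq2 {x : Finset (Fin n) × TraceMonoid n I} (hne : (TsetF x).Nonempty)
    (hmem : (TsetF x).min' hne ∉ x.1)
    (ht : ∃ t, x.2 = gen (I := I) ((TsetF x).min' hne) * t) :
    gstep x = (insert ((TsetF x).min' hne) x.1, Classical.choose ht) := by
  rw [gstep, dif_pos hne, if_neg hmem, dif_pos ht]

lemma gstep_spec {w : TraceMonoid n I} (hw : w ≠ 1)
    {x : Finset (Fin n) × TraceMonoid n I}
    (hQ : IsMClique I x.1) (hs : wordOf I x.1 * x.2 = w) :
    IsMClique I (gstep x).1 ∧ wordOf I (gstep x).1 * (gstep x).2 = w ∧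
      ((gstep x).1.card + 1 = x.1.card ∨ x.1.card + 1 = (gstep x).1.card) ∧
      gstep (gstep x) = x := by
  have hne : (TsetF x).Nonempty := TsetF_nonempty hw hs
  set a := (TsetF x).min' hne with hadef
  have hminx : ∀ b ∈ TsetF x, a ≤ b := fun b hb => Finset.min'_le _ _ hb
  by_cases hmem : a ∈ x.1
  · have hg : gstep x = (x.1.erase a, gen a * x.2) := gstep_eq1 hne hmem
    have hQ' : IsMClique I (x.1.erase a) := clique_mono hQ (Finset.erase_subset _ _)
    have hword : wordOf I x.1 = wordOf I (x.1.erase a) * gen a := by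
      have h1 := (wordOf_insert (Finset.notMem_erase a x.1)
        (by rw [Finset.insert_erase hmem]; exact hQ)).2
      rw [Finset.insert_erase hmem] at h1
      exact h1
    have hprod : wordOf I (x.1.erase a) * (gen a * x.2) = w := by
      rw [← mul_assoc, ← hword, hs]
    have hcard : (gstep x).1.card + 1 = x.1.card := by
      rw [hg]; exact Finset.card_erase_add_one hmem
    -- the inverse step
    obtain ⟨hne2, hmin2⟩ := TsetF_min_case1 (v := x.2) hQ hmem hminx
    have hgg : gstep (gstep x) = x := by
      rw [hg]
      have ht : ∃ t, (x.1.erase a, gen (I := I) a * x.2).2 =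
          gen (I := I) ((TsetF (x.1.erase a, gen (I := I) a * x.2)).min' hne2) * t :=
        ⟨x.2, by rw [hmin2]⟩
      rw [gstep_eq2 hne2 (by rw [hmin2]; exact Finset.notMem_erase a x.1) ht]
      have e1 : gen (I := I) ((TsetF (x.1.erase a, gen (I := I) a * x.2)).min' hne2) *
            Classical.choose ht = gen a * Classical.choose ht :=
        congrArg (fun z => gen (I := I) z * Classical.choose ht) hmin2
      have hch' : gen (I := I) a * x.2 = gen a * Classical.choose ht :=
        (Classical.choose_spec ht).trans e1
      rw [Prod.ext_iff]
      constructor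
      · show insert ((TsetF (x.1.erase a, gen (I := I) a * x.2)).min' hne2)
            (x.1.erase a) = x.1
        rw [hmin2, Finset.insert_erase hmem]
      · show Classical.choose ht = x.2
        exact (cancel_gen hch').symm
    exact ⟨by rw [hg]; exact hQ', by rw [hg]; exact hprod, Or.inl hcard, hgg⟩
  · have haT := Finset.min'_mem (TsetF x) hne
    rcases mem_TsetF.1 haT with h | ⟨ht0, hcl⟩
    · exact absurd h hmem
    have ht : ∃ t, x.2 = gen (I := I) a * t := ht0
    have hg : gstep x = (insert a x.1, Classical.choose ht) := gstep_eq2 hne hmem ht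
    have hch : x.2 = gen a * Classical.choose ht := Classical.choose_spec ht
    have hword := (wordOf_insert hmem hcl).2
    have hprod : wordOf I (insert a x.1) * Classical.choose ht = w := by
      rw [hword, mul_assoc, ← hch, hs]
    have hcard : x.1.card + 1 = (gstep x).1.card := by
      rw [hg]; exact (Finset.card_insert_of_notMem hmem).symm
    obtain ⟨hne2, hmin2⟩ := TsetF_min_case2 hcl hmem hch hminx
    have hgg : gstep (gstep x) = x := by
      rw [hg, gstep_eq1 hne2 (by rw [hmin2]; exact Finset.mem_insert_self _ _)]
      rw [Prod.ext_iff]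
      constructor
      · show (insert a x.1).erase
            ((TsetF (insert a x.1, Classical.choose ht)).min' hne2) = x.1
        rw [hmin2, Finset.erase_insert hmem]
      · show gen ((TsetF (insert a x.1, Classical.choose ht)).min' hne2) *
            Classical.choose ht = x.2
        rw [hmin2, ← hch]
    exact ⟨by rw [hg]; exact hcl, by rw [hg]; exact hprod, Or.inr hcard, hgg⟩

end Invol

section Sums
variable {n : ℕ} {I : Set (Fin n × Fin n)}

noncomputable def Pfin (I : Set (Fin n × Fin n)) (w : TraceMonoid n I) :
    Finset (TraceMonoid n I × TraceMonoid n I) := (finite_pairs w).toFinset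

noncomputable def Vfin (I : Set (Fin n × Fin n)) (w : TraceMonoid n I) :
    Finset (TraceMonoid n I) := (finite_rdiv w).toFinset

noncomputable def Tfin (I : Set (Fin n × Fin n)) (w : TraceMonoid n I) :
    Finset (Finset (Fin n) × TraceMonoid n I) :=
  (((Finset.univ : Finset (Fin n)).powerset.filter (IsMClique I)) ×ˢ Vfin I w).filter
    (fun x => wordOf I x.1 * x.2 = w)

lemma mem_Pfin {w : TraceMonoid n I} {p} : p ∈ Pfin I w ↔ p.1 * p.2 = w :=
  Set.Finite.mem_toFinset _

lemma mem_Vfin {w v : TraceMonoid n I} : v ∈ Vfin I w ↔ ∃ u, u * v = w :=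
  Set.Finite.mem_toFinset _

lemma mem_Tfin {w : TraceMonoid n I} {x} :
    x ∈ Tfin I w ↔ IsMClique I x.1 ∧ wordOf I x.1 * x.2 = w := by
  rw [Tfin, Finset.mem_filter, Finset.mem_product, Finset.mem_filter, Finset.mem_powerset]
  constructor
  · rintro ⟨⟨⟨_, h1⟩, _⟩, h3⟩
    exact ⟨h1, h3⟩
  · rintro ⟨h1, h2⟩
    exact ⟨⟨⟨Finset.subset_univ _, h1⟩, mem_Vfin.2 ⟨wordOf I x.1, h2⟩⟩, h2⟩

lemma cauchy_eq_sum (f g : TraceMonoid n I → ℤ) (w : TraceMonoid n I) :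
    cauchy f g w = ∑ p ∈ Pfin I w, f p.1 * g p.2 := by
  rw [cauchy]
  rw [finsum_eq_finset_sum_of_support_subset _ (s := Pfin I w) ?hsub]
  case hsub =>
    intro p hp
    rw [Function.mem_support] at hp
    by_cases h : p.1 * p.2 = w
    · exact Finset.mem_coe.2 (mem_Pfin.2 h)
    · exact absurd (if_neg h) hp
  refine Finset.sum_congr rfl (fun p hp => ?_)
  rw [if_pos (mem_Pfin.1 hp)]

lemma lenHom_eq_one {v : TraceMonoid n I} (h : lenHom n I v = 1) : v = 1 := by
  obtain ⟨l, rfl⟩ := exists_list v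
  rw [lenHom_mk] at h
  have hl : l.length = 0 := by
    have := congrArg Multiplicative.toAdd h
    simpa using this
  rw [List.length_eq_zero_iff.1 hl]
  rfl

lemma key_sum (w : TraceMonoid n I) :
    ∑ x ∈ Tfin I w, (-1 : ℤ) ^ x.1.card = if w = 1 then 1 else 0 := by
  by_cases hw : w = 1
  · subst hw
    rw [if_pos rfl]
    have hT : Tfin I (1 : TraceMonoid n I) = {((∅ : Finset (Fin n)), (1 : TraceMonoid n I))} := by
      ext x
      rw [mem_Tfin, Finset.mem_singleton]
      constructor
      · rintro ⟨hQ, hp⟩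
        have hlen := congrArg (lenHom n I) hp
        rw [map_mul, lenHom_wordOf, map_one] at hlen
        have hc : x.1.card + Multiplicative.toAdd (lenHom n I x.2) = 0 := by
          have := congrArg Multiplicative.toAdd hlen
          simpa using this
        have h1 : x.1 = ∅ := Finset.card_eq_zero.1 (by omega)
        have h2 : x.2 = 1 := by
          apply lenHom_eq_one
          have : Multiplicative.toAdd (lenHom n I x.2) = 0 := by omega
          have := congrArg Multiplicative.ofAdd this
          simpa using this
        exact Prod.ext h1 h2
      · rintro rfl
        refine ⟨fun a ha => absurd ha (Finset.notMem_empty a), ?_⟩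
        rw [wordOf_empty, one_mul]
    rw [hT, Finset.sum_singleton]
    simp
  · rw [if_neg hw]
    refine Finset.sum_involution (fun x _ => gstep x) ?_ ?_ ?_ ?_
    · intro x hx
      obtain ⟨hQ, hs⟩ := mem_Tfin.1 hx
      obtain ⟨_, _, hcard, _⟩ := gstep_spec hw hQ hs
      rcases hcard with h | h
      · rw [← h, pow_succ]; ring
      · rw [← h, pow_succ]; ring
    · intro x hx _
      obtain ⟨hQ, hs⟩ := mem_Tfin.1 hx
      obtain ⟨_, _, hcard, _⟩ := gstep_spec hw hQ hs
      intro heq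
      have heq' : gstep x = x := heq
      rw [heq'] at hcard
      omega
    · intro x hx
      obtain ⟨hQ, hs⟩ := mem_Tfin.1 hx
      obtain ⟨h1, h2, _, _⟩ := gstep_spec hw hQ hs
      exact mem_Tfin.2 ⟨h1, h2⟩
    · intro x hx
      obtain ⟨hQ, hs⟩ := mem_Tfin.1 hx
      exact (gstep_spec hw hQ hs).2.2.2

lemma inner_swap (w : TraceMonoid n I) (Q : Finset (Fin n)) (c : ℤ) :
    ∑ p ∈ Pfin I w, (if wordOf I Q = p.1 then c else 0)
      = ∑ v ∈ Vfin I w, (if wordOf I Q * v = w then c else 0) := by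
  rw [← Finset.sum_filter, ← Finset.sum_filter]
  refine Finset.sum_bij (fun p _ => p.2) ?_ ?_ ?_ ?_
  · intro p hp
    obtain ⟨hp1, hp2⟩ := Finset.mem_filter.1 hp
    rw [Finset.mem_filter]
    have hw : p.1 * p.2 = w := mem_Pfin.1 hp1
    refine ⟨mem_Vfin.2 ⟨p.1, hw⟩, ?_⟩
    show wordOf I Q * p.2 = w
    rw [hp2]
    exact hw
  · intro p hp p' hp' hpp
    obtain ⟨_, hp2⟩ := Finset.mem_filter.1 hp
    obtain ⟨_, hp2'⟩ := Finset.mem_filter.1 hp'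
    exact Prod.ext (hp2.symm.trans hp2') hpp
  · intro v hv
    obtain ⟨hv1, hv2⟩ := Finset.mem_filter.1 hv
    refine ⟨(wordOf I Q, v), Finset.mem_filter.2 ⟨mem_Pfin.2 hv2, rfl⟩, rfl⟩
  · intro p _
    rfl

lemma side1 (w : TraceMonoid n I) :
    cauchy (cliqueSeries n I) (fun _ => 1) w = deltaOne w := by
  rw [cauchy_eq_sum, deltaOne]
  simp only [mul_one, cliqueSeries]
  rw [Finset.sum_comm]
  have h1 : ∀ Q ∈ (Finset.univ : Finset (Fin n)).powerset.filter (IsMClique I),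
      ∑ p ∈ Pfin I w, (if wordOf I Q = p.1 then (-1 : ℤ) ^ Q.card else 0)
        = ∑ v ∈ Vfin I w, (if wordOf I Q * v = w then (-1 : ℤ) ^ Q.card else 0) :=
    fun Q _ => inner_swap w Q _
  rw [Finset.sum_congr rfl h1, ← Finset.sum_product']
  rw [show ∑ x ∈ ((Finset.univ : Finset (Fin n)).powerset.filter (IsMClique I)) ×ˢ Vfin I w,
      (if wordOf I x.1 * x.2 = w then (-1 : ℤ) ^ x.1.card else 0)
      = ∑ x ∈ Tfin I w, (-1 : ℤ) ^ x.1.card from (Finset.sum_filter _ _).symm]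
  refine (key_sum w).trans ?_
  by_cases h : w = 1
  · rw [if_pos h, if_pos h]
  · rw [if_neg h, if_neg h]

lemma cliqueSeries_revT (x : TraceMonoid n I) :
    cliqueSeries n I (revT x) = cliqueSeries n I x := by
  simp only [cliqueSeries]
  refine Finset.sum_congr rfl (fun Q hQ => ?_)
  have hc : IsMClique I Q := (Finset.mem_filter.1 hQ).2
  have hiff : wordOf I Q = revT x ↔ wordOf I Q = x := by
    constructor
    · intro h
      have := congrArg revT h
      rwa [revT_wordOf hc, revT_revT] at this
    · rintro rfl
      exact (revT_wordOf hc).symm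
  exact if_congr hiff rfl rfl

lemma side2 (w : TraceMonoid n I) :
    cauchy (fun _ => 1) (cliqueSeries n I) w = deltaOne w := by
  have heq : cauchy (cliqueSeries n I) (fun _ => 1) (revT w)
      = cauchy (fun _ => 1) (cliqueSeries n I) w := by
    rw [cauchy, cauchy]
    refine finsum_eq_of_bijective (fun p => (revT p.2, revT p.1)) ?_ ?_
    · have hinv : Function.Involutive
          (fun p : TraceMonoid n I × TraceMonoid n I => (revT p.2, revT p.1)) := by
        intro p
        simp [revT_revT]
      exact hinv.bijective
    · intro p
      have hcond : p.1 * p.2 = revT w ↔ revT p.2 * revT p.1 = w := by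
        rw [← revT_mul]
        constructor
        · intro h
          rw [h, revT_revT]
        · intro h
          rw [← h, revT_revT]
      by_cases h : p.1 * p.2 = revT w
      · rw [if_pos h, if_pos (hcond.1 h), mul_one, one_mul, cliqueSeries_revT]
      · rw [if_neg h, if_neg (fun hc => h (hcond.2 hc))]
  rw [← heq, side1, deltaOne, deltaOne]
  by_cases h : w = 1
  · rw [if_pos (revT_eq_one_iff.2 h), if_pos h]
  · rw [if_neg (fun hc => h (revT_eq_one_iff.1 hc)), if_neg h]

end Sums


/-- **Cartier–Foata.** The clique polynomial of a free partially commutative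
monoid is a two-sided inverse of the constant power series χ_M in the ring of
formal power series on M (functions M → ℤ with the Cauchy product, whose unit
is the characteristic function of the identity). -/
theorem stmt_0 (n : ℕ) (I : Set (Fin n × Fin n)) :
    cauchy (cliqueSeries n I) (fun _ => 1) = deltaOne ∧
    cauchy (fun _ => 1) (cliqueSeries n I) = deltaOne := by
  exact ⟨funext side1, funext side2⟩
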